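/- The map φ_n sending the vertex (i,j) of the 132-core D_n to the chord e_{i,j+1} of the complete graph on n+1 polygon vertices is a bijection from the vertex set of D_n onto the set of chords {(a,b) : 1 ≤ a < b ≤ n+1} of the (n+1)-gon, and independent sets in D_n correspond exactly to non-crossing subsets of chords. -/
import Mathlib


/-- Vertices of the cores: pairs (i,j) with 1 ≤ i ≤ j ≤ n. -/
def DVert (n : ℕ) (p : ℕ × ℕ) : Prop := 1 ≤ p.1 ∧ p.1 ≤ p.2 ∧ p.2 ≤ n

/-- One-directional (southeast) adjacency of the 132-core. -/
def DOne (n : ℕ) (p q : ℕ × ℕ) : Prop :=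
  p.1 < q.1 ∧ q.1 ≤ p.2 ∧ p.2 < q.2 ∧ q.2 ≤ n

/-- Adjacency of the 132-core `D_n`. -/
def DAdj (n : ℕ) (p q : ℕ × ℕ) : Prop := DOne n p q ∨ DOne n q p

/-- One-directional adjacency of the 123-core. -/
def UOne (n : ℕ) (p q : ℕ × ℕ) : Prop :=
  p.1 < q.1 ∧ p.2 < q.2 ∧ q.1 ≤ n ∧ q.2 ≤ n

/-- Adjacency of the 123-core `U_n`. -/
def UAdj (n : ℕ) (p q : ℕ × ℕ) : Prop := UOne n p q ∨ UOne n q p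

/-- Chords `e_{a₁,a₂}` and `e_{b₁,b₂}` (with `a₁ < b₁`) cross iff
`a₁ < b₁ < a₂ < b₂`. -/
def Crosses (a b : ℕ × ℕ) : Prop := a.1 < b.1 ∧ b.1 < a.2 ∧ a.2 < b.2

/-- Symmetrised crossing relation. -/
def CrossSym (a b : ℕ × ℕ) : Prop := Crosses a b ∨ Crosses b a

/-- A chord of the polygon with `m` vertices labelled `1, …, m`. -/
def Chord (m : ℕ) (e : ℕ × ℕ) : Prop := 1 ≤ e.1 ∧ e.1 < e.2 ∧ e.2 ≤ m

/-- The map `φ_n : (i,j) ↦ e_{i,j+1}`. -/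
def phi (p : ℕ × ℕ) : ℕ × ℕ := (p.1, p.2 + 1)

/-- `φ_n` is a bijection from the vertices of `D_n` onto the chords of the
`(n+1)`-gon, and independent sets of `D_n` correspond exactly to
non-crossing sets of chords. -/
theorem phi_bijection_noncrossing (n : ℕ) :
    Set.BijOn phi {p | DVert n p} {e | Chord (n + 1) e} ∧
    ∀ S : Set (ℕ × ℕ), (∀ p ∈ S, DVert n p) →
      ((∀ p ∈ S, ∀ q ∈ S, ¬ DAdj n p q) ↔
        (∀ p ∈ S, ∀ q ∈ S, ¬ CrossSym (phi p) (phi q))) := by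
  constructor
  · refine ⟨fun p hp => ?_, fun p hp q hq h => ?_, fun e he => ?_⟩
    · simp only [Set.mem_setOf_eq, DVert, Chord, phi] at *; omega
    · simp only [phi, Prod.mk.injEq] at h
      exact Prod.ext h.1 (by omega)
    · simp only [Set.mem_setOf_eq, Chord] at he
      exact ⟨(e.1, e.2 - 1), by simp only [Set.mem_setOf_eq, DVert]; omega,
        by simp only [phi]; exact Prod.ext rfl (by omega)⟩
  · intro S hS
    have key : ∀ p ∈ S, ∀ q ∈ S, (DAdj n p q ↔ CrossSym (phi p) (phi q)) := by
      intro p hp q hq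
      have h1 := hS p hp; have h2 := hS q hq
      simp only [DVert] at h1 h2
      simp only [DAdj, DOne, CrossSym, Crosses, phi]
      omega
    constructor
    · intro h p hp q hq hc
      exact h p hp q hq ((key p hp q hq).mpr hc)
    · intro h p hp q hq ha
      exact h p hp q hq ((key p hp q hq).mp ha)
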